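/- Let m < n be positive integers, λ ∈ ℝ, and X an m×n real matrix. Then J_m(λ)·X = X·J_n(λ)ᵀ if and only if X = [Y 0] where Y is an m×m matrix satisfying J_m(λ)·Y = Y·J_m(λ)ᵀ and Y is in the intertwining set of J_m(λ) (the last n−m columns of X vanish). -/

import Mathlib

def JordanCell (k : ℕ) (l : ℝ) : Matrix (Fin k) (Fin k) ℝ :=
  Matrix.of fun i j => if i = j then l else if (i : ℕ) + 1 = (j : ℕ) then 1 else 0

lemma jordan_mul_apply {m n : ℕ} (l : ℝ) (X : Matrix (Fin m) (Fin n) ℝ) (i : Fin m) (j : Fin n) :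
    (JordanCell m l * X) i j
      = l * X i j + (if h : (i : ℕ) + 1 < m then X ⟨(i : ℕ) + 1, h⟩ j else 0) := by
  rw [Matrix.mul_apply]
  have hsplit : ∀ k : Fin m, JordanCell m l i k * X k j
      = (if k = i then l * X i j else 0)
        + (if h : (i : ℕ) + 1 < m then (if k = ⟨(i : ℕ) + 1, h⟩ then X ⟨(i : ℕ) + 1, h⟩ j else 0) else 0) := by
    intro k
    simp only [JordanCell, Matrix.of_apply]
    by_cases h1 : i = k
    · subst h1
      rw [if_pos rfl, if_pos rfl]
      split
      · rw [if_neg (by intro hk; have := congrArg Fin.val hk; simp at this)]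
        ring
      · ring
    · rw [if_neg h1, if_neg (fun hk : k = i => h1 hk.symm)]
      by_cases h2 : (i : ℕ) + 1 < m
      · rw [dif_pos h2]
        by_cases h3 : (i : ℕ) + 1 = (k : ℕ)
        · have hk : k = ⟨(i : ℕ) + 1, h2⟩ := Fin.ext h3.symm
          subst hk
          rw [if_pos h3, if_pos rfl]
          ring
        · rw [if_neg h3, if_neg (by intro hk; exact h3 (by rw [hk]))]
          ring
      · rw [dif_neg h2, if_neg (fun hk : (i : ℕ) + 1 = (k : ℕ) => h2 (by rw [hk]; exact k.isLt))]
        ring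
  simp only [hsplit]
  rw [Finset.sum_add_distrib]
  congr 1
  · simp
  · by_cases h2 : (i : ℕ) + 1 < m
    · simp [h2]
    · simp [h2]

lemma mul_jordanT_apply {m n : ℕ} (l : ℝ) (X : Matrix (Fin m) (Fin n) ℝ) (i : Fin m) (j : Fin n) :
    (X * (JordanCell n l).transpose) i j
      = l * X i j + (if h : (j : ℕ) + 1 < n then X i ⟨(j : ℕ) + 1, h⟩ else 0) := by
  rw [Matrix.mul_apply]
  have hsplit : ∀ k : Fin n, X i k * (JordanCell n l).transpose k j
      = (if k = j then l * X i j else 0)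
        + (if h : (j : ℕ) + 1 < n then (if k = ⟨(j : ℕ) + 1, h⟩ then X i ⟨(j : ℕ) + 1, h⟩ else 0) else 0) := by
    intro k
    simp only [JordanCell, Matrix.transpose_apply, Matrix.of_apply]
    by_cases h1 : j = k
    · subst h1
      rw [if_pos rfl, if_pos rfl]
      split
      · rw [if_neg (by intro hk; have := congrArg Fin.val hk; simp at this)]
        ring
      · ring
    · rw [if_neg h1, if_neg (fun hk : k = j => h1 hk.symm)]
      by_cases h2 : (j : ℕ) + 1 < n
      · rw [dif_pos h2]
        by_cases h3 : (j : ℕ) + 1 = (k : ℕ)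
        · have hk : k = ⟨(j : ℕ) + 1, h2⟩ := Fin.ext h3.symm
          subst hk
          rw [if_pos h3, if_pos rfl]
          ring
        · rw [if_neg h3, if_neg (by intro hk; exact h3 (by rw [hk]))]
          ring
      · rw [dif_neg h2, if_neg (fun hk : (j : ℕ) + 1 = (k : ℕ) => h2 (by rw [hk]; exact k.isLt))]
        ring
  simp only [hsplit]
  rw [Finset.sum_add_distrib]
  congr 1
  · simp
  · by_cases h2 : (j : ℕ) + 1 < n
    · simp [h2]
    · simp [h2]

lemma intertwine_iff {m n : ℕ} (l : ℝ) (X : Matrix (Fin m) (Fin n) ℝ) :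
    JordanCell m l * X = X * (JordanCell n l).transpose ↔
      ∀ (i : Fin m) (j : Fin n),
        (if h : (i : ℕ) + 1 < m then X ⟨(i : ℕ) + 1, h⟩ j else 0)
          = (if h : (j : ℕ) + 1 < n then X i ⟨(j : ℕ) + 1, h⟩ else 0) := by
  rw [← Matrix.ext_iff]
  constructor
  · intro h i j
    have := h i j
    rw [jordan_mul_apply, mul_jordanT_apply] at this
    exact add_left_cancel this
  · intro h i j
    rw [jordan_mul_apply, mul_jordanT_apply, h i j]

/-- For `m < n`, a rectangular `X` satisfies `J_m(λ) X = X J_n(λ)ᵀ` iff `X = [Y 0]`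
with `Y` in the intertwining set of `J_m(λ)`. -/
theorem intertwine_rect_jordanCell_lt (m n : ℕ) (hm : 0 < m) (hmn : m < n) (l : ℝ)
    (X : Matrix (Fin m) (Fin n) ℝ) :
    JordanCell m l * X = X * (JordanCell n l).transpose ↔
      ∃ Y : Matrix (Fin m) (Fin m) ℝ,
        JordanCell m l * Y = Y * (JordanCell m l).transpose ∧
        ∀ (i : Fin m) (j : Fin n),
          if h : (j : ℕ) < m then X i j = Y i ⟨(j : ℕ), h⟩ else X i j = 0 := by
  rw [intertwine_iff]
  constructor
  · intro h
    -- the key vanishing property: X i j = 0 whenever m ≤ i + j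
    have key : ∀ k : ℕ, ∀ (i : Fin m) (j : Fin n),
        m - 1 - (i : ℕ) ≤ k → m ≤ (i : ℕ) + (j : ℕ) → X i j = 0 := by
      intro k
      induction k with
      | zero =>
        intro i j hik hij
        have him := i.isLt
        have hjn := j.isLt
        have hi : ¬ ((i : ℕ) + 1 < m) := by omega
        have hj' : (j : ℕ) - 1 + 1 < n := by omega
        have hh := h i ⟨(j : ℕ) - 1, by omega⟩
        rw [dif_neg hi, dif_pos hj'] at hh
        have e : (⟨(j : ℕ) - 1 + 1, hj'⟩ : Fin n) = j := Fin.ext (by simp; omega)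
        rw [e] at hh
        exact hh.symm
      | succ k ih =>
        intro i j hik hij
        have him := i.isLt
        have hjn := j.isLt
        by_cases hi : (i : ℕ) + 1 < m
        · have hj' : (j : ℕ) - 1 + 1 < n := by omega
          have hh := h i ⟨(j : ℕ) - 1, by omega⟩
          rw [dif_pos hi, dif_pos hj'] at hh
          have e : (⟨(j : ℕ) - 1 + 1, hj'⟩ : Fin n) = j := Fin.ext (by simp; omega)
          rw [e] at hh
          rw [← hh]
          exact ih ⟨(i : ℕ) + 1, hi⟩ ⟨(j : ℕ) - 1, by omega⟩ (by simp; omega) (by simp; omega)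
        · have hj' : (j : ℕ) - 1 + 1 < n := by omega
          have hh := h i ⟨(j : ℕ) - 1, by omega⟩
          rw [dif_neg hi, dif_pos hj'] at hh
          have e : (⟨(j : ℕ) - 1 + 1, hj'⟩ : Fin n) = j := Fin.ext (by simp; omega)
          rw [e] at hh
          exact hh.symm
    have hX0 : ∀ (i : Fin m) (j : Fin n), m ≤ (j : ℕ) → X i j = 0 := by
      intro i j hj
      exact key m i j (by omega) (by omega)
    refine ⟨fun i j => X i ⟨(j : ℕ), j.isLt.trans hmn⟩, ?_, ?_⟩
    · rw [intertwine_iff (m := m) (n := m) l (fun i j => X i ⟨(j : ℕ), j.isLt.trans hmn⟩)]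
      intro i j
      have hj' : (j : ℕ) + 1 < n := by have := j.isLt; omega
      have hh := h i ⟨(j : ℕ), j.isLt.trans hmn⟩
      rw [dif_pos hj'] at hh
      by_cases hi : (i : ℕ) + 1 < m
      · rw [dif_pos hi] at hh ⊢
        by_cases hj : (j : ℕ) + 1 < m
        · rw [dif_pos hj]
          exact hh
        · rw [dif_neg hj]
          rw [hh]
          exact hX0 i ⟨(j : ℕ) + 1, hj'⟩ (by simp; omega)
      · rw [dif_neg hi] at hh ⊢
        by_cases hj : (j : ℕ) + 1 < m
        · rw [dif_pos hj]
          exact hh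
        · rw [dif_neg hj]
    · intro i j
      by_cases hjm : (j : ℕ) < m
      · rw [dif_pos hjm]
      · rw [dif_neg hjm]
        exact hX0 i j (by omega)
  · rintro ⟨Y, hY, hXY⟩
    rw [intertwine_iff] at hY
    have hX0 : ∀ (i : Fin m) (j : Fin n), m ≤ (j : ℕ) → X i j = 0 := by
      intro i j hj
      have := hXY i j
      rwa [dif_neg (by omega)] at this
    have hXv : ∀ (i : Fin m) (j : Fin n) (hj : (j : ℕ) < m), X i j = Y i ⟨(j : ℕ), hj⟩ := by
      intro i j hj
      have := hXY i j
      rwa [dif_pos hj] at this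
    intro i j
    by_cases hjm : (j : ℕ) < m
    · have hh := hY i ⟨(j : ℕ), hjm⟩
      have hj' : (j : ℕ) + 1 < n := by omega
      rw [dif_pos hj']
      by_cases hi : (i : ℕ) + 1 < m
      · rw [dif_pos hi] at hh ⊢
        rw [hXv ⟨(i : ℕ) + 1, hi⟩ j hjm, hh]
        by_cases hj : (j : ℕ) + 1 < m
        · rw [dif_pos hj]
          exact (hXv i ⟨(j : ℕ) + 1, hj'⟩ (by simpa using hj)).symm
        · rw [dif_neg hj]
          exact (hX0 i ⟨(j : ℕ) + 1, hj'⟩ (by simp; omega)).symm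
      · rw [dif_neg hi] at hh ⊢
        by_cases hj : (j : ℕ) + 1 < m
        · rw [dif_pos hj] at hh
          rw [hXv i ⟨(j : ℕ) + 1, hj'⟩ (by simpa using hj)]
          exact hh
        · exact (hX0 i ⟨(j : ℕ) + 1, hj'⟩ (by simp; omega)).symm
    · have hz1 : (if h : (i : ℕ) + 1 < m then X ⟨(i : ℕ) + 1, h⟩ j else 0) = 0 := by
        split
        · exact hX0 _ j (by omega)
        · rfl
      have hz2 : (if h : (j : ℕ) + 1 < n then X i ⟨(j : ℕ) + 1, h⟩ else 0) = 0 := by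
        split
        · exact hX0 i _ (by simp; omega)
        · rfl
      rw [hz1, hz2]
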